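/- Suppose Ψ(α,β,c) = (z₁,w₁,z₂,w₂) where Ψ(α,β,c) = (c·m_α(c), (l/c)·m_α(l/c), c·m_β(c), (l/c)·m_β(l/c)), l ≠ 0, z₁ ≠ z₂. Then α and its conjugate satisfy the linear relations α = c·z₂(1-z₁/l)/(z₂-z₁) + (1/c)·z₁(z₂-l)/(z₂-z₁) and conj(α) = c·(1-z₂/l)/(z₁-z₂) + (1/c)·(z₁-l)/(z₁-z₂). -/

import Mathlib

open Complex Metric

theorem alpha_linear_relations (l : ℂ) (hl : l ≠ 0) (α c z1 z2 : ℂ)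
    (hα : α ∈ ball (0 : ℂ) 1) (hc : c ∈ ball (0 : ℂ) 1) (hc0 : c ≠ 0)
    (hlc : l / c ∈ ball (0 : ℂ) 1)
    (hz1 : z1 = c * ((α - c) / (1 - (starRingEnd ℂ) α * c)))
    (hz2 : z2 = (l / c) * ((α - l / c) / (1 - (starRingEnd ℂ) α * (l / c))))
    (hne : z1 ≠ z2) :
    α = c * (z2 * (1 - z1 / l) / (z2 - z1)) + (1 / c) * (z1 * (z2 - l) / (z2 - z1)) ∧
    (starRingEnd ℂ) α = c * ((1 - z2 / l) / (z1 - z2)) + (1 / c) * ((z1 - l) / (z1 - z2)) := by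
  have hα1 : ‖α‖ < 1 := by simpa using hα
  have hc1 : ‖c‖ < 1 := by simpa using hc
  have hlc1 : ‖l / c‖ < 1 := by simpa using hlc
  have hd1 : 1 - (starRingEnd ℂ) α * c ≠ 0 := by
    intro h
    have : ‖(starRingEnd ℂ) α * c‖ = 1 := by
      have : (starRingEnd ℂ) α * c = 1 := by linear_combination -h
      simp [this]
    rw [norm_mul, Complex.norm_conj] at this
    nlinarith [norm_nonneg α, norm_nonneg c]
  have hd2 : 1 - (starRingEnd ℂ) α * (l / c) ≠ 0 := by
    intro h
    have : ‖(starRingEnd ℂ) α * (l / c)‖ = 1 := by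
      have : (starRingEnd ℂ) α * (l / c) = 1 := by linear_combination -h
      simp [this]
    rw [norm_mul, Complex.norm_conj] at this
    nlinarith [norm_nonneg α, norm_nonneg (l / c)]
  have e1 : z1 * (1 - (starRingEnd ℂ) α * c) = c * (α - c) := by
    rw [hz1, mul_assoc, div_mul_cancel₀ _ hd1]
  have e2 : z2 * (c * c - (starRingEnd ℂ) α * l * c) = l * (c * α - l) := by
    have hz2' : z2 * (1 - (starRingEnd ℂ) α * (l / c)) = l / c * (α - l / c) := by
      rw [hz2, mul_assoc, div_mul_cancel₀ _ hd2]
    have key : l / c * (α - l / c) * (c * c) = l * (c * α - l) := by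
      field_simp
    have h2 : (1 - (starRingEnd ℂ) α * (l / c)) * (c * c) = c * c - (starRingEnd ℂ) α * l * c := by
      field_simp
    linear_combination (c * c) * hz2' + key - z2 * h2
  have hne' : z2 - z1 ≠ 0 := sub_ne_zero.mpr (Ne.symm hne)
  have hne'' : z1 - z2 ≠ 0 := sub_ne_zero.mpr hne
  constructor
  · have h1 : α * (l * c * (z2 - z1)) = c ^ 2 * z2 * (l - z1) + l * z1 * (z2 - l) := by
      linear_combination z1 * e2 - (z2 * l) * e1
    field_simp
    linear_combination h1
  · have h1 : (starRingEnd ℂ) α * (l * c * (z1 - z2)) = c ^ 2 * (l - z2) + l * (z1 - l) := by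
      linear_combination e2 - l * e1
    field_simp
    linear_combination h1
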